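/- Let φ be an admissible function. Then there exist λ > 1 and constants c, C > 0, depending only on φ, such that for every t > 0 and every r ≥ λt: c · (1 + log(r/t))^{−1} φ(1 + log(r/t)) / r ≤ ∫_r^∞ (1 + log(s/t))^{−1} φ(1 + log(s/t)) · ds/s² ≤ C · (1 + log(r/t))^{−1} φ(1 + log(r/t)) / r. -/

import Mathlib

open Real MeasureTheory

set_option maxHeartbeats 2000000 in
theorem stmt6 (φ : ℝ → ℝ) (γ β : ℝ) (hγ : 0 < γ) (hβ : 0 < β)
    (hmap : ∀ x : ℝ, 1 ≤ x → 1 ≤ φ x)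
    (hφ1 : φ 1 = 1)
    (hconc : ConcaveOn ℝ (Set.Ici (1 : ℝ)) (fun x => Real.log (φ x)))
    (hder : ∀ x : ℝ, 1 ≤ x → γ / x ≤ deriv φ x / φ x ∧ deriv φ x / φ x ≤ β / x) :
    ∃ lam c C : ℝ, 1 < lam ∧ 0 < c ∧ 0 < C ∧
      ∀ t r : ℝ, 0 < t → lam * t ≤ r →
        c * ((1 + Real.log (r / t))⁻¹ * φ (1 + Real.log (r / t)) / r) ≤
          (∫ s in Set.Ioi r, (1 + Real.log (s / t))⁻¹ * φ (1 + Real.log (s / t)) / s ^ 2) ∧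
        (∫ s in Set.Ioi r, (1 + Real.log (s / t))⁻¹ * φ (1 + Real.log (s / t)) / s ^ 2) ≤
          C * ((1 + Real.log (r / t))⁻¹ * φ (1 + Real.log (r / t)) / r) := by
  have hφpos : ∀ x : ℝ, 1 ≤ x → 0 < φ x := fun x hx => lt_of_lt_of_le one_pos (hmap x hx)
  have hdiff : ∀ x : ℝ, 1 ≤ x → DifferentiableAt ℝ φ x := by
    intro x hx
    by_contra h
    have h0 : deriv φ x = 0 := deriv_zero_of_not_differentiableAt h
    have h1 := (hder x hx).1
    rw [h0] at h1
    have hx0 : (0:ℝ) < x := lt_of_lt_of_le one_pos hx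
    have : (0:ℝ) < γ / x := div_pos hγ hx0
    simp only [zero_div] at h1
    linarith
  have hderivpos : ∀ x : ℝ, 1 ≤ x → 0 < deriv φ x := by
    intro x hx
    have hx0 : (0:ℝ) < x := lt_of_lt_of_le one_pos hx
    have h2 : 0 < deriv φ x / φ x := lt_of_lt_of_le (div_pos hγ hx0) (hder x hx).1
    have := mul_pos h2 (hφpos x hx)
    rwa [div_mul_cancel₀ _ (ne_of_gt (hφpos x hx))] at this
  have hmono : MonotoneOn φ (Set.Ici 1) := by
    apply monotoneOn_of_deriv_nonneg (convex_Ici 1)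
    · exact fun x hx => (hdiff x hx).continuousAt.continuousWithinAt
    · intro x hx
      rw [interior_Ici] at hx
      exact (hdiff x (le_of_lt hx)).differentiableWithinAt
    · intro x hx
      rw [interior_Ici] at hx
      exact (hderivpos x (le_of_lt hx)).le
  set B : ℝ := β + 1 with hBdef
  have hB1 : (1:ℝ) < B := by linarith
  have hB0 : (0:ℝ) < B := by linarith
  -- growth lemma: φ b ≤ φ a * (b/a)^B for 1 ≤ a ≤ b
  have hgd : ∀ x : ℝ, 1 ≤ x →
      HasDerivAt (fun y => B * Real.log y - Real.log (φ y)) (B * x⁻¹ - deriv φ x / φ x) x := by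
    intro x hx
    have hx0 : (0:ℝ) < x := lt_of_lt_of_le one_pos hx
    exact ((Real.hasDerivAt_log (ne_of_gt hx0)).const_mul B).sub
      (((hdiff x hx).hasDerivAt).log (ne_of_gt (hφpos x hx)))
  have hgmono : MonotoneOn (fun y => B * Real.log y - Real.log (φ y)) (Set.Ici 1) := by
    apply monotoneOn_of_deriv_nonneg (convex_Ici 1)
    · exact fun x hx => (hgd x hx).differentiableAt.continuousAt.continuousWithinAt
    · intro x hx
      rw [interior_Ici] at hx
      exact (hgd x (le_of_lt hx)).differentiableAt.differentiableWithinAt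
    · intro x hx
      rw [interior_Ici] at hx
      have hx1 : (1:ℝ) ≤ x := le_of_lt hx
      have hx0 : (0:ℝ) < x := lt_of_lt_of_le one_pos hx1
      rw [(hgd x hx1).deriv]
      have h2 : deriv φ x / φ x ≤ β / x := (hder x hx1).2
      have h3 : β / x ≤ B * x⁻¹ := by
        rw [div_eq_mul_inv]
        exact mul_le_mul_of_nonneg_right (by linarith) (inv_nonneg.2 hx0.le)
      linarith
  have hgrow : ∀ a b : ℝ, 1 ≤ a → a ≤ b → φ b ≤ φ a * (b / a) ^ B := by
    intro a b ha hab
    have hb : (1:ℝ) ≤ b := le_trans ha hab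
    have ha0 : (0:ℝ) < a := lt_of_lt_of_le one_pos ha
    have hb0 : (0:ℝ) < b := lt_of_lt_of_le one_pos hb
    have hba : (0:ℝ) < b / a := div_pos hb0 ha0
    have hmo := hgmono (Set.mem_Ici.2 ha) (Set.mem_Ici.2 hb) hab
    simp only at hmo
    have hlog : Real.log (φ b) ≤ Real.log (φ a * (b / a) ^ B) := by
      rw [Real.log_mul (ne_of_gt (hφpos a ha)) (ne_of_gt (Real.rpow_pos_of_pos hba B)),
        Real.log_rpow hba, Real.log_div (ne_of_gt hb0) (ne_of_gt ha0)]
      nlinarith [hmo]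
    have := Real.exp_le_exp.2 hlog
    rwa [Real.exp_log (hφpos b hb), Real.exp_log
      (mul_pos (hφpos a ha) (Real.rpow_pos_of_pos hba B))] at this
  -- constants
  refine ⟨2, (4 * (1 + Real.log 2))⁻¹, 2 * (2 * B) ^ B, one_lt_two, ?_, ?_, ?_⟩
  · have := Real.log_pos one_lt_two
    positivity
  · have : (0:ℝ) < (2 * B) ^ B := Real.rpow_pos_of_pos (by linarith) B
    positivity
  intro t r ht hr
  have hr0 : (0:ℝ) < r := lt_of_lt_of_le (by linarith) hr
  have hrt2 : (2:ℝ) ≤ r / t := (le_div_iff₀ ht).2 (by linarith)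
  have hlogrt : (0:ℝ) < Real.log (r / t) := Real.log_pos (by linarith)
  set ur : ℝ := 1 + Real.log (r / t) with hurdef
  have hur1 : (1:ℝ) ≤ ur := by simp [hurdef]; linarith
  have hur0 : (0:ℝ) < ur := lt_of_lt_of_le one_pos hur1
  set ψr : ℝ := ur⁻¹ * φ ur with hψrdef
  have hψr0 : (0:ℝ) < ψr := mul_pos (inv_pos.2 hur0) (hφpos ur hur1)
  set f : ℝ → ℝ := fun s => (1 + Real.log (s / t))⁻¹ * φ (1 + Real.log (s / t)) / s ^ 2 with hfdef
  -- basic facts about u s for s ≥ r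
  have hukey : ∀ s : ℝ, r ≤ s → 1 + Real.log (s / t) = ur + Real.log (s / r) ∧ 0 ≤ Real.log (s / r) := by
    intro s hs
    have hs0 : (0:ℝ) < s := lt_of_lt_of_le hr0 hs
    constructor
    · rw [hurdef, Real.log_div (ne_of_gt hs0) (ne_of_gt ht), Real.log_div (ne_of_gt hs0) (ne_of_gt hr0),
        Real.log_div (ne_of_gt hr0) (ne_of_gt ht)]
      ring
    · exact Real.log_nonneg ((le_div_iff₀ hr0).2 (by linarith))
  have hus1 : ∀ s : ℝ, r ≤ s → ur ≤ 1 + Real.log (s / t) := by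
    intro s hs
    obtain ⟨h1, h2⟩ := hukey s hs
    rw [h1]; linarith
  have hf_nonneg : ∀ s : ℝ, r ≤ s → 0 ≤ f s := by
    intro s hs
    have hs0 : (0:ℝ) < s := lt_of_lt_of_le hr0 hs
    have h1 : (1:ℝ) ≤ 1 + Real.log (s / t) := le_trans hur1 (hus1 s hs)
    have := hφpos _ h1
    have : (0:ℝ) < 1 + Real.log (s / t) := lt_of_lt_of_le one_pos h1
    simp only [hfdef]
    positivity
  set M : ℝ := ψr * (2 * B) ^ B * r ^ (-(1/2) : ℝ) with hMdef
  clear_value ur ψr f M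
  have h2B0 : (0:ℝ) < 2 * B := by linarith
  -- pointwise upper bound
  have hub : ∀ s : ℝ, r ≤ s → f s ≤ M * s ^ (-(3/2) : ℝ) := by
    intro s hs
    have hs0 : (0:ℝ) < s := lt_of_lt_of_le hr0 hs
    obtain ⟨hu_eq, hx0⟩ := hukey s hs
    set x : ℝ := Real.log (s / r) with hxdef
    have hus : (1:ℝ) + Real.log (s / t) = ur + x := hu_eq
    have hus1' : (1:ℝ) ≤ ur + x := by linarith
    have hus0 : (0:ℝ) < ur + x := by linarith
    -- step 1: numerator bound
    have step1 : (ur + x)⁻¹ * φ (ur + x) ≤ ψr * ((ur + x) / ur) ^ B := by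
      have h1 : φ (ur + x) ≤ φ ur * ((ur + x) / ur) ^ B := hgrow ur (ur + x) hur1 (by linarith)
      have h2 : (ur + x)⁻¹ ≤ ur⁻¹ := inv_anti₀ hur0 (by linarith)
      calc (ur + x)⁻¹ * φ (ur + x) ≤ ur⁻¹ * (φ ur * ((ur + x) / ur) ^ B) := by
            apply mul_le_mul h2 h1 (le_of_lt (hφpos _ hus1')) (le_of_lt (inv_pos.2 hur0))
        _ = ψr * ((ur + x) / ur) ^ B := by rw [hψrdef]; ring
    -- step 2: ratio bound
    have step2 : ((ur + x) / ur) ^ B ≤ (1 + x) ^ B := by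
      apply Real.rpow_le_rpow (by positivity) _ hB0.le
      rw [div_le_iff₀ hur0]
      nlinarith
    -- step 3: (1+x)^B ≤ (2B)^B * exp(x/2)
    have step3 : (1 + x) ^ B ≤ (2 * B) ^ B * Real.exp (x / 2) := by
      have h1 : (1:ℝ) + x ≤ 2 * B * Real.exp (x / (2 * B)) := by
        have h := mul_le_mul_of_nonneg_left (Real.add_one_le_exp (x / (2 * B))) h2B0.le
        have hx' : 2 * B * (x / (2 * B) + 1) = x + 2 * B := by field_simp
        rw [hx'] at h
        linarith
      calc (1 + x) ^ B ≤ (2 * B * Real.exp (x / (2 * B))) ^ B := by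
            apply Real.rpow_le_rpow (by linarith) h1 hB0.le
        _ = (2 * B) ^ B * Real.exp (x / 2) := by
            rw [Real.mul_rpow h2B0.le (Real.exp_pos _).le,
              Real.rpow_def_of_pos (Real.exp_pos _), Real.log_exp]
            congr 2
            field_simp
    -- step 4: exp(x/2) = (s/r)^(1/2)
    have step4 : Real.exp (x / 2) = s ^ ((1:ℝ)/2) * r ^ (-(1/2) : ℝ) := by
      have : Real.exp (x / 2) = (s / r) ^ ((1:ℝ)/2) := by
        rw [Real.rpow_def_of_pos (div_pos hs0 hr0), hxdef]
        congr 1; ring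
      rw [this, Real.div_rpow hs0.le hr0.le, Real.rpow_neg hr0.le, div_eq_mul_inv]
    -- combine
    have hnum : (ur + x)⁻¹ * φ (ur + x) ≤ M * Real.exp (x / 2) / r ^ (-(1/2) : ℝ) := by
      have := le_trans step1 (by
        have := mul_le_mul_of_nonneg_left (le_trans step2 step3) hψr0.le
        exact this)
      calc (ur + x)⁻¹ * φ (ur + x) ≤ ψr * ((2 * B) ^ B * Real.exp (x / 2)) := this
        _ = M * Real.exp (x / 2) / r ^ (-(1/2) : ℝ) := by
            rw [hMdef]
            field_simp [ne_of_gt (Real.rpow_pos_of_pos hr0 (-(1/2) : ℝ))]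
    have hfinal : f s ≤ M * Real.exp (x / 2) / r ^ (-(1/2) : ℝ) / s ^ 2 := by
      simp only [hfdef, hus]
      exact div_le_div_of_nonneg_right hnum (by positivity) |>.trans_eq rfl
    refine hfinal.trans_eq ?_
    rw [step4]
    have hs2 : (s:ℝ) ^ 2 = s ^ ((2:ℝ)) := by
      rw [← Real.rpow_natCast s 2]; norm_num
    rw [hs2]
    rw [show (-(3/2) : ℝ) = (1:ℝ)/2 + -(2:ℝ) by norm_num, Real.rpow_add hs0,
      Real.rpow_neg hs0.le]
    field_simp [ne_of_gt (Real.rpow_pos_of_pos hr0 (-(1/2) : ℝ)),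
      ne_of_gt (Real.rpow_pos_of_pos hs0 (2:ℝ))]
  -- continuity / measurability of f on Ioi r
  have hφcont : ContinuousOn φ (Set.Ici 1) :=
    fun x hx => (hdiff x hx).continuousAt.continuousWithinAt
  have hucont : ContinuousOn (fun s : ℝ => 1 + Real.log (s / t)) (Set.Ioi r) := by
    apply continuousOn_const.add
    apply ContinuousOn.log
    · exact (continuousOn_id.div_const t)
    · intro s hs
      have hs0 : (0:ℝ) < s := lt_trans hr0 hs
      positivity
  have humap : Set.MapsTo (fun s : ℝ => 1 + Real.log (s / t)) (Set.Ioi r) (Set.Ici 1) :=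
    fun s hs => Set.mem_Ici.2 (le_trans hur1 (hus1 s (le_of_lt hs)))
  have hfcont : ContinuousOn f (Set.Ioi r) := by
    rw [hfdef]
    apply ContinuousOn.div
    · exact (hucont.inv₀ (fun s hs => ne_of_gt (lt_of_lt_of_le one_pos
        (le_trans hur1 (hus1 s (le_of_lt hs)))))).mul (hφcont.comp hucont humap)
    · exact (continuousOn_id.pow 2)
    · intro s hs
      have hs0 : (0:ℝ) < s := lt_trans hr0 hs
      positivity
  have hgInt : IntegrableOn (fun s : ℝ => M * s ^ (-(3/2) : ℝ)) (Set.Ioi r) := by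
    exact (integrableOn_Ioi_rpow_of_lt (by norm_num) hr0).const_mul M
  have hfInt : IntegrableOn f (Set.Ioi r) := by
    apply Integrable.mono' hgInt (hfcont.aestronglyMeasurable measurableSet_Ioi)
    refine (ae_restrict_iff' measurableSet_Ioi).2 (Filter.Eventually.of_forall (fun s hs => ?_))
    rw [Real.norm_eq_abs, abs_of_nonneg (hf_nonneg s (le_of_lt hs))]
    exact hub s (le_of_lt hs)
  have hInt32 : ∫ s in Set.Ioi r, s ^ (-(3/2) : ℝ) = 2 * r ^ (-(1/2) : ℝ) := by
    rw [integral_Ioi_rpow_of_lt (by norm_num) hr0,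
      show (-(3/2) : ℝ) + 1 = -(1/2) by norm_num]
    ring
  constructor
  · -- lower bound
    have hsubset : Set.Ioc r (2 * r) ⊆ Set.Ioi r := Set.Ioc_subset_Ioi_self
    have hfInt2 : IntegrableOn f (Set.Ioc r (2 * r)) := hfInt.mono_set hsubset
    set m : ℝ := ψr * ((1 + Real.log 2) * (2 * r) ^ 2)⁻¹ with hmdef
    clear_value m
    have hlog2 : (0:ℝ) < Real.log 2 := Real.log_pos one_lt_two
    have hm0 : (0:ℝ) < m := by
      rw [hmdef]
      exact mul_pos hψr0 (inv_pos.2 (by positivity))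
    have hlb : ∀ s ∈ Set.Ioc r (2 * r), m ≤ f s := by
      intro s hs
      obtain ⟨hs1, hs2⟩ := hs
      have hs0 : (0:ℝ) < s := lt_trans hr0 hs1
      obtain ⟨hu_eq, hx0⟩ := hukey s hs1.le
      set x : ℝ := Real.log (s / r) with hxdef
      clear_value x
      have hxle : x ≤ Real.log 2 := by
        rw [hxdef]
        exact Real.log_le_log (by positivity) ((div_le_iff₀ hr0).2 (by linarith))
      have hus1' : (1:ℝ) ≤ ur + x := by linarith
      have h1 : φ ur ≤ φ (ur + x) := hmono (Set.mem_Ici.2 hur1) (Set.mem_Ici.2 hus1') (by linarith)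
      have h2 : (ur + x)⁻¹ ≥ (ur * (1 + Real.log 2))⁻¹ := by
        apply inv_anti₀ (by linarith)
        nlinarith
      have h3 : (s:ℝ) ^ 2 ≤ (2 * r) ^ 2 := by nlinarith
      simp only [hfdef, hu_eq]
      rw [hmdef]
      have hA : ψr * ((1 + Real.log 2) * (2 * r) ^ 2)⁻¹
          = (ur * (1 + Real.log 2))⁻¹ * φ ur * ((2 * r) ^ 2)⁻¹ := by
        rw [hψrdef, mul_inv, mul_inv]
        ring
      rw [hA, div_eq_mul_inv]
      apply mul_le_mul
      · calc (ur * (1 + Real.log 2))⁻¹ * φ ur ≤ (ur + x)⁻¹ * φ ur := by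
              apply mul_le_mul_of_nonneg_right h2 (hφpos ur hur1).le
          _ ≤ (ur + x)⁻¹ * φ (ur + x) := by
              apply mul_le_mul_of_nonneg_left h1 (by positivity)
      · exact inv_anti₀ (by positivity) h3
      · positivity
      · have := hφpos _ hus1'
        positivity
    have hstep1 : (volume (Set.Ioc r (2 * r))).toReal • m ≤ ∫ s in Set.Ioc r (2 * r), f s := by
      rw [← measureReal_def, ← setIntegral_const]
      apply setIntegral_mono_on (integrableOn_const measure_Ioc_lt_top.ne) hfInt2
        measurableSet_Ioc hlb
    have hstep2 : ∫ s in Set.Ioc r (2 * r), f s ≤ ∫ s in Set.Ioi r, f s := by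
      apply setIntegral_mono_set hfInt
      · exact (ae_restrict_iff' measurableSet_Ioi).2
          (Filter.Eventually.of_forall (fun s hs => hf_nonneg s (le_of_lt hs)))
      · exact HasSubset.Subset.eventuallyLE hsubset
    have hvol : (volume (Set.Ioc r (2 * r))).toReal = r := by
      rw [Real.volume_Ioc, ENNReal.toReal_ofReal (by linarith)]
      ring
    have hl2 : (0:ℝ) < 1 + Real.log 2 := by positivity
    have heq : (4 * (1 + Real.log 2))⁻¹ * (ψr / r) = r * m := by
      rw [hmdef]
      field_simp
      ring
    calc (4 * (1 + Real.log 2))⁻¹ * (ψr / r) = r * m := heq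
      _ = (volume (Set.Ioc r (2 * r))).toReal • m := by rw [hvol, smul_eq_mul]
      _ ≤ ∫ s in Set.Ioc r (2 * r), f s := hstep1
      _ ≤ ∫ s in Set.Ioi r, f s := hstep2
  · -- upper bound
    have h1 : ∫ s in Set.Ioi r, f s ≤ ∫ s in Set.Ioi r, M * s ^ (-(3/2) : ℝ) := by
      apply setIntegral_mono_on hfInt hgInt measurableSet_Ioi
      exact fun s hs => hub s (le_of_lt hs)
    have h2 : ∫ s in Set.Ioi r, M * s ^ (-(3/2) : ℝ) = M * (2 * r ^ (-(1/2) : ℝ)) := by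
      rw [integral_const_mul, hInt32]
    have hrr : r ^ (-(1/2) : ℝ) * r ^ (-(1/2) : ℝ) = r⁻¹ := by
      rw [← Real.rpow_add hr0, show (-(1/2) : ℝ) + (-(1/2) : ℝ) = -1 by norm_num,
        Real.rpow_neg_one]
    have h3 : M * (2 * r ^ (-(1/2) : ℝ)) = 2 * (2 * B) ^ B * (ψr / r) := by
      rw [hMdef]
      calc ψr * (2 * B) ^ B * r ^ (-(1/2) : ℝ) * (2 * r ^ (-(1/2) : ℝ))
          = 2 * (2 * B) ^ B * (ψr * (r ^ (-(1/2) : ℝ) * r ^ (-(1/2) : ℝ))) := by ring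
        _ = 2 * (2 * B) ^ B * (ψr / r) := by rw [hrr, ← div_eq_mul_inv]
    calc ∫ s in Set.Ioi r, f s ≤ ∫ s in Set.Ioi r, M * s ^ (-(3/2) : ℝ) := h1
      _ = M * (2 * r ^ (-(1/2) : ℝ)) := h2
      _ = 2 * (2 * B) ^ B * (ψr / r) := h3
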